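/- arXiv:1205.6315 — 3 statements merged into one kernel-verified Lean document; each statement's English description precedes it below -/
import Mathlib

section
/- Let l : [0,T] → ℝ be Lebesgue integrable. Then for each ρ ∈ (0,T] there exists a measurable set I_ρ ⊆ [0,T] with Lebesgue measure |I_ρ| = ρ such that ∫_{I_ρ} l(s) ds = (ρ/T)·∫_0^T l(s) ds + o(ρ) as ρ → 0. (A standard concrete choice: one may realize the error term as o(ρ) uniformly from the Lebesgue differentiation/density argument.) -/
open MeasureTheory Filter

lemma stmt_3_key (T : ℝ) (hT : 0 < T) (l : ℝ → ℝ)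
    (hl : IntegrableOn l (Set.Icc 0 T)) (ρ : ℝ) (hρ0 : 0 < ρ) (hρT : ρ ≤ T) :
    ∃ S : Set ℝ, MeasurableSet S ∧ S ⊆ Set.Icc 0 T ∧ volume S = ENNReal.ofReal ρ ∧
      (∫ s in S, l s) = (ρ / T) * ∫ s in Set.Icc 0 T, l s := by
  set Lf : ℝ → ℝ := Set.indicator (Set.Icc 0 T) l with hLf
  have hLfi : Integrable Lf volume := hl.integrable_indicator measurableSet_Icc
  have hint : ∀ a b : ℝ, IntervalIntegrable Lf volume a b := fun a b =>
    hLfi.intervalIntegrable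
  set F : ℝ → ℝ := fun x => ∫ t in (0:ℝ)..x, Lf t with hF
  have hFc : Continuous F := intervalIntegral.continuous_primitive hint 0
  have hFab : ∀ a b : ℝ, a ≤ b → F b - F a = ∫ t in Set.Ioc a b, Lf t := by
    intro a b hab
    have := intervalIntegral.integral_add_adjacent_intervals (hint 0 a) (hint a b)
    rw [← intervalIntegral.integral_of_le hab]
    simp only [F] at *
    linarith
  have hFT : F T = ∫ s in Set.Icc 0 T, l s := by
    have h := hFab 0 T hT.le
    have h0 : F 0 = 0 := by simp [F]
    rw [h0, sub_zero] at h
    rw [h, MeasureTheory.integral_Icc_eq_integral_Ioc]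
    rw [hLf, MeasureTheory.setIntegral_indicator measurableSet_Icc]
    rw [show Set.Ioc (0:ℝ) T ∩ Set.Icc 0 T = Set.Ioc 0 T from
      Set.inter_eq_left.mpr Set.Ioc_subset_Icc_self]
  -- the sliding window value
  set g : ℝ → ℝ := fun a => F (min (a + ρ) T) + F (max (a + ρ - T) 0) - F a with hg
  have hgc : Continuous g := by
    apply Continuous.sub
    · exact ((hFc.comp ((continuous_id.add continuous_const).min continuous_const)).add
        (hFc.comp (((continuous_id.add continuous_const).sub continuous_const).max
          continuous_const)))
    · exact hFc
  have hgint : IntervalIntegrable g volume 0 T := hgc.intervalIntegrable 0 T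
  -- average of g
  have havg : (∫ a in (0:ℝ)..T, g a) = ρ * F T := by
    have hsplit : ∀ f : ℝ → ℝ, Continuous f →
        (∫ a in (0:ℝ)..T, f a) = (∫ a in (0:ℝ)..(T - ρ), f a) + ∫ a in (T - ρ)..T, f a := by
      intro f hf
      rw [intervalIntegral.integral_add_adjacent_intervals (hf.intervalIntegrable _ _)
        (hf.intervalIntegrable _ _)]
    have h1c : Continuous fun a => F (min (a + ρ) T) :=
      hFc.comp ((continuous_id.add continuous_const).min continuous_const)
    have h2c : Continuous fun a => F (max (a + ρ - T) 0) :=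
      hFc.comp (((continuous_id.add continuous_const).sub continuous_const).max
        continuous_const)
    have hI1 : (∫ a in (0:ℝ)..T, F (min (a + ρ) T)) = (∫ x in ρ..T, F x) + ρ * F T := by
      rw [hsplit _ h1c]
      have e1 : (∫ a in (0:ℝ)..(T - ρ), F (min (a + ρ) T)) = ∫ a in (0:ℝ)..(T - ρ), F (a + ρ) := by
        apply intervalIntegral.integral_congr
        intro x hx
        rw [Set.uIcc_of_le (by linarith)] at hx
        have : x + ρ ≤ T := by have := hx.2; linarith
        simp [min_eq_left this]
      have e2 : (∫ a in (T - ρ)..T, F (min (a + ρ) T)) = ∫ a in (T - ρ)..T, F T := by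
        apply intervalIntegral.integral_congr
        intro x hx
        rw [Set.uIcc_of_le (by linarith)] at hx
        have : T ≤ x + ρ := by have := hx.1; linarith
        simp [min_eq_right this]
      rw [e1, e2, intervalIntegral.integral_comp_add_right F ρ,
        intervalIntegral.integral_const, smul_eq_mul]
      ring
    have hI2 : (∫ a in (0:ℝ)..T, F (max (a + ρ - T) 0)) = ∫ x in (0:ℝ)..ρ, F x := by
      rw [hsplit _ h2c]
      have e1 : (∫ a in (0:ℝ)..(T - ρ), F (max (a + ρ - T) 0)) = 0 := by
        have : (∫ a in (0:ℝ)..(T - ρ), F (max (a + ρ - T) 0)) = ∫ a in (0:ℝ)..(T - ρ), (0:ℝ) := by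
          apply intervalIntegral.integral_congr
          intro x hx
          rw [Set.uIcc_of_le (by linarith)] at hx
          have : x + ρ - T ≤ 0 := by have := hx.2; linarith
          simp [max_eq_right this, F]
        simp [this]
      have e2 : (∫ a in (T - ρ)..T, F (max (a + ρ - T) 0)) = ∫ a in (T - ρ)..T, F (a + (ρ - T)) := by
        apply intervalIntegral.integral_congr
        intro x hx
        rw [Set.uIcc_of_le (by linarith)] at hx
        have : 0 ≤ x + ρ - T := by have := hx.1; linarith
        have h' : x + ρ - T = x + (ρ - T) := by ring
        show F (max (x + ρ - T) 0) = F (x + (ρ - T))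
        rw [max_eq_left this, h']
      rw [e1, e2, intervalIntegral.integral_comp_add_right F (ρ - T)]
      norm_num
    have hI3 : (∫ x in (0:ℝ)..ρ, F x) + (∫ x in ρ..T, F x) = ∫ x in (0:ℝ)..T, F x :=
      intervalIntegral.integral_add_adjacent_intervals (hFc.intervalIntegrable _ _)
        (hFc.intervalIntegrable _ _)
    have : (∫ a in (0:ℝ)..T, g a)
        = (∫ a in (0:ℝ)..T, F (min (a + ρ) T)) + (∫ a in (0:ℝ)..T, F (max (a + ρ - T) 0))
          - ∫ a in (0:ℝ)..T, F a := by
      show (∫ a in (0:ℝ)..T, (F (min (a + ρ) T) + F (max (a + ρ - T) 0) - F a)) = _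
      rw [intervalIntegral.integral_sub (f := fun a => F (min (a + ρ) T) + F (max (a + ρ - T) 0))
        ((h1c.add h2c).intervalIntegrable _ _)
        (hFc.intervalIntegrable _ _), intervalIntegral.integral_add
        (h1c.intervalIntegrable _ _) (h2c.intervalIntegrable _ _)]
    rw [this, hI1, hI2]
    linarith
  -- mean value: find a with g a = ρ/T * F T
  obtain ⟨xm, hxm, hxmin⟩ := (isCompact_Icc (a := (0:ℝ)) (b := T)).exists_isMinOn
    (Set.nonempty_Icc.2 hT.le) hgc.continuousOn
  obtain ⟨xM, hxM, hxmax⟩ := (isCompact_Icc (a := (0:ℝ)) (b := T)).exists_isMaxOn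
    (Set.nonempty_Icc.2 hT.le) hgc.continuousOn
  have hlow : T * g xm ≤ ρ * F T := by
    rw [← havg]
    calc T * g xm = ∫ _a in (0:ℝ)..T, g xm := by
          rw [intervalIntegral.integral_const, smul_eq_mul]; ring
      _ ≤ ∫ a in (0:ℝ)..T, g a := by
          apply intervalIntegral.integral_mono_on hT.le
            (intervalIntegrable_const) hgint
          intro x hx; exact hxmin hx
  have hhigh : ρ * F T ≤ T * g xM := by
    rw [← havg]
    calc (∫ a in (0:ℝ)..T, g a) ≤ ∫ _a in (0:ℝ)..T, g xM := by
          apply intervalIntegral.integral_mono_on hT.le hgint intervalIntegrable_const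
          intro x hx; exact hxmax hx
      _ = T * g xM := by rw [intervalIntegral.integral_const, smul_eq_mul]; ring
  have hmem : ρ / T * F T ∈ Set.uIcc (g xm) (g xM) := by
    have h1 : g xm ≤ ρ / T * F T := by
      rw [div_mul_eq_mul_div, le_div_iff₀ hT]
      linarith
    have h2 : ρ / T * F T ≤ g xM := by
      rw [div_mul_eq_mul_div, div_le_iff₀ hT]
      linarith
    rw [Set.uIcc_of_le (le_trans h1 h2)]
    exact ⟨h1, h2⟩
  have hsub : Set.uIcc xm xM ⊆ Set.Icc (0:ℝ) T :=
    Set.ordConnected_Icc.uIcc_subset hxm hxM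
  obtain ⟨a, ha, hga⟩ := intermediate_value_uIcc (hgc.continuousOn (s := Set.uIcc xm xM)) hmem
  have haT : a ∈ Set.Icc (0:ℝ) T := hsub ha
  -- build the set
  set m := min (a + ρ) T with hm
  set e := max (a + ρ - T) 0 with he
  have ham : a ≤ m := le_min (by linarith [hρ0.le]) haT.2
  have hea : e ≤ a := max_le (by linarith [haT.2]) haT.1
  have h0e : 0 ≤ e := le_max_right _ _
  have hmT : m ≤ T := min_le_right _ _
  refine ⟨Set.Ioc a m ∪ Set.Ioc 0 e, (measurableSet_Ioc).union measurableSet_Ioc, ?_, ?_, ?_⟩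
  · intro x hx
    rcases hx with hx | hx
    · exact ⟨le_trans haT.1 hx.1.le, le_trans hx.2 hmT⟩
    · exact ⟨hx.1.le, le_trans hx.2 (le_trans hea haT.2)⟩
  · have hdisj : Disjoint (Set.Ioc a m) (Set.Ioc 0 e) := by
      rw [Set.disjoint_left]
      intro x hx hx'
      exact absurd (le_trans hx'.2 hea) (not_le.2 hx.1)
    rw [measure_union hdisj measurableSet_Ioc, Real.volume_Ioc, Real.volume_Ioc,
      ← ENNReal.ofReal_add (by linarith) (by linarith)]
    congr 1
    rcases le_or_gt (a + ρ) T with h | h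
    · rw [hm, he, min_eq_left h, max_eq_right (by linarith)]; ring
    · rw [hm, he, min_eq_right h.le, max_eq_left (by linarith)]; ring
  · have hdisj : Disjoint (Set.Ioc a m) (Set.Ioc 0 e) := by
      rw [Set.disjoint_left]
      intro x hx hx'
      exact absurd (le_trans hx'.2 hea) (not_le.2 hx.1)
    have hsub1 : Set.Ioc a m ⊆ Set.Icc 0 T :=
      fun x hx => ⟨le_trans haT.1 hx.1.le, le_trans hx.2 hmT⟩
    have hsub2 : Set.Ioc 0 e ⊆ Set.Icc 0 T :=
      fun x hx => ⟨hx.1.le, le_trans hx.2 (le_trans hea haT.2)⟩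
    rw [MeasureTheory.setIntegral_union hdisj measurableSet_Ioc
      (hl.mono_set hsub1) (hl.mono_set hsub2)]
    have heq1 : (∫ s in Set.Ioc a m, l s) = F m - F a := by
      rw [hFab a m ham]
      apply MeasureTheory.setIntegral_congr_fun measurableSet_Ioc
      intro x hx
      exact (Set.indicator_of_mem (hsub1 hx) l).symm
    have heq2 : (∫ s in Set.Ioc 0 e, l s) = F e - F 0 := by
      rw [hFab 0 e h0e]
      apply MeasureTheory.setIntegral_congr_fun measurableSet_Ioc
      intro x hx
      exact (Set.indicator_of_mem (hsub2 hx) l).symm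
    have hF0 : F 0 = 0 := by simp [F]
    rw [heq1, heq2, hF0, ← hFT]
    have : F m + F e - F a = ρ / T * F T := hga
    linarith

theorem stmt_3 (T : ℝ) (hT : 0 < T) (l : ℝ → ℝ)
    (hl : IntegrableOn l (Set.Icc 0 T)) :
    ∃ I : ℝ → Set ℝ,
      (∀ ρ ∈ Set.Ioc 0 T, MeasurableSet (I ρ) ∧ I ρ ⊆ Set.Icc 0 T ∧
        volume (I ρ) = ENNReal.ofReal ρ) ∧
      (fun ρ => (∫ s in I ρ, l s) - (ρ / T) * ∫ s in Set.Icc 0 T, l s)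
        =o[nhdsWithin 0 (Set.Ioi 0)] (fun ρ => ρ) := by
  classical
  refine ⟨fun ρ => if h : ρ ∈ Set.Ioc 0 T then
    (stmt_3_key T hT l hl ρ h.1 h.2).choose else ∅, ?_, ?_⟩
  · intro ρ hρ
    simp only [dif_pos hρ]
    obtain ⟨h1, h2, h3, _⟩ := (stmt_3_key T hT l hl ρ hρ.1 hρ.2).choose_spec
    exact ⟨h1, h2, h3⟩
  · have hev : ∀ᶠ ρ in nhdsWithin 0 (Set.Ioi 0),
        ((∫ s in (if h : ρ ∈ Set.Ioc 0 T then
          (stmt_3_key T hT l hl ρ h.1 h.2).choose else ∅), l s)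
          - (ρ / T) * ∫ s in Set.Icc 0 T, l s) = 0 := by
      have h1 : ∀ᶠ ρ in nhdsWithin 0 (Set.Ioi 0), ρ < T :=
        eventually_nhdsWithin_of_eventually_nhds (Filter.Tendsto.eventually_lt_const hT
          (Continuous.tendsto continuous_id 0))
      filter_upwards [h1, self_mem_nhdsWithin] with ρ hρT hρ0
      have hmem : ρ ∈ Set.Ioc 0 T := ⟨hρ0, hρT.le⟩
      rw [dif_pos hmem]
      obtain ⟨_, _, _, h4⟩ := (stmt_3_key T hT l hl ρ hmem.1 hmem.2).choose_spec
      rw [h4]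
      ring
    exact (Asymptotics.isLittleO_zero _ _).congr'
      (Filter.EventuallyEq.symm hev) Filter.EventuallyEq.rfl
end

section
/- The gradient of the distance function to a nonempty closed convex set K ⊆ ℝᵈ at any point x ∉ K equals (x − P_K(x))/‖x − P_K(x)‖, where P_K is the metric projection onto K; in particular the gradient has unit norm, and ⟨∇dist(·,K)(x), y − x⟩ ≤ 0 for all y ∈ K. -/
open Metric RealInnerProductSpace

set_option maxHeartbeats 1000000 in
theorem stmt_5 (d : ℕ) (K : Set (EuclideanSpace ℝ (Fin d)))
    (hKne : K.Nonempty) (hKcl : IsClosed K) (hKconv : Convex ℝ K)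
    (x : EuclideanSpace ℝ (Fin d)) (hx : x ∉ K)
    (P : EuclideanSpace ℝ (Fin d)) (hP : P ∈ K)
    (hproj : ∀ y ∈ K, dist x P ≤ dist x y) :
    gradient (fun y => Metric.infDist y K) x = ‖x - P‖⁻¹ • (x - P) ∧
    ‖gradient (fun y => Metric.infDist y K) x‖ = 1 ∧
    ∀ y ∈ K, (inner ℝ (gradient (fun y => Metric.infDist y K) x) (y - x) : ℝ) ≤ 0 := by
  classical
  haveI : Nonempty K := hKne.to_subtype
  have hxP : x - P ≠ 0 := sub_ne_zero.2 (fun h => hx (h ▸ hP))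
  have hn : ‖x - P‖ ≠ 0 := norm_ne_zero_iff.2 hxP
  have hnpos : (0:ℝ) < ‖x - P‖ := norm_pos_iff.2 hxP
  set u : EuclideanSpace ℝ (Fin d) := ‖x - P‖⁻¹ • (x - P) with hu
  have hnu : ‖u‖ = 1 := by
    rw [hu, norm_smul, norm_inv, norm_norm, inv_mul_cancel₀ hn]
  -- variational inequality
  have hfx : Metric.infDist x K = ‖x - P‖ := by
    apply le_antisymm
    · simpa [dist_eq_norm] using Metric.infDist_le_dist_of_mem hP
    · rw [Metric.infDist_eq_iInf]
      exact le_ciInf fun w => by simpa [dist_eq_norm] using hproj w w.2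
  have hvar : ∀ z ∈ K, ⟪x - P, z - P⟫ ≤ 0 := by
    have hinf : ‖x - P‖ = ⨅ w : K, ‖x - (w : EuclideanSpace ℝ (Fin d))‖ := by
      rw [← hfx, Metric.infDist_eq_iInf]
      simp_rw [dist_eq_norm]
    exact (norm_eq_iInf_iff_real_inner_le_zero hKconv hP).1 hinf
  have huxP : ⟪u, x - P⟫ = ‖x - P‖ := by
    rw [hu, real_inner_smul_left, real_inner_self_eq_norm_sq, sq]
    field_simp
  -- lower bound on infDist
  have hlow : ∀ y : EuclideanSpace ℝ (Fin d), ⟪u, y - P⟫ ≤ Metric.infDist y K := by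
    intro y
    rw [Metric.infDist_eq_iInf]
    refine le_ciInf fun z => ?_
    have hsplit : y - P = (y - (z : EuclideanSpace ℝ (Fin d))) + ((z : EuclideanSpace ℝ (Fin d)) - P) := by abel
    have h1 : ⟪u, (z : EuclideanSpace ℝ (Fin d)) - P⟫ ≤ 0 := by
      rw [hu, real_inner_smul_left]
      exact mul_nonpos_of_nonneg_of_nonpos (inv_nonneg.2 (norm_nonneg _)) (hvar z z.2)
    have h2 : ⟪u, y - (z : EuclideanSpace ℝ (Fin d))⟫ ≤ ‖y - (z : EuclideanSpace ℝ (Fin d))‖ := by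
      have := real_inner_le_norm u (y - (z : EuclideanSpace ℝ (Fin d)))
      rwa [hnu, one_mul] at this
    calc ⟪u, y - P⟫ = ⟪u, y - (z : EuclideanSpace ℝ (Fin d))⟫ + ⟪u, (z : EuclideanSpace ℝ (Fin d)) - P⟫ := by
          rw [hsplit, inner_add_right]
      _ ≤ ‖y - (z : EuclideanSpace ℝ (Fin d))‖ + 0 := add_le_add h2 h1
      _ = dist y (z : EuclideanSpace ℝ (Fin d)) := by rw [add_zero, dist_eq_norm]
  -- derivative of y ↦ ‖y - P‖ at x
  have hsq : HasFDerivAt (fun y : EuclideanSpace ℝ (Fin d) => ‖y - P‖ ^ 2) (2 • (innerSL ℝ (x - P))) x := by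
    have h := ((hasFDerivAt_id x).sub_const P).norm_sq
    simpa using h
  have hsqrt : HasDerivAt Real.sqrt (1 / (2 * ‖x - P‖)) (‖x - P‖ ^ 2) := by
    have h := Real.hasDerivAt_sqrt (by positivity : ‖x - P‖ ^ 2 ≠ 0)
    simpa [Real.sqrt_sq (norm_nonneg _)] using h
  have hderiv : HasFDerivAt (fun y : EuclideanSpace ℝ (Fin d) => ‖y - P‖)
      ((1 / (2 * ‖x - P‖)) • (2 • (innerSL ℝ (x - P)))) x := by
    have h := hsqrt.comp_hasFDerivAt x hsq
    have heq : Real.sqrt ∘ (fun y : EuclideanSpace ℝ (Fin d) => ‖y - P‖ ^ 2) = fun y : EuclideanSpace ℝ (Fin d) => ‖y - P‖ := by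
      funext y; simp [Function.comp, Real.sqrt_sq (norm_nonneg _)]
    rwa [heq] at h
  have happ : ∀ v : EuclideanSpace ℝ (Fin d), ((1 / (2 * ‖x - P‖)) • (2 • (innerSL ℝ (x - P)))) v = ⟪u, v⟫ := by
    intro v
    simp only [ContinuousLinearMap.smul_apply, innerSL_apply_apply, smul_eq_mul, hu,
      real_inner_smul_left]
    field_simp
    ring
  have hgrad : HasGradientAt (fun y => Metric.infDist y K) u x := by
    rw [hasGradientAt_iff_hasFDerivAt]
    rw [hasFDerivAt_iff_isLittleO_nhds_zero] at hderiv ⊢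
    refine (Asymptotics.isBigO_of_le _ fun h => ?_).trans_isLittleO hderiv
    have happ2 : (InnerProductSpace.toDual ℝ (EuclideanSpace ℝ (Fin d)) u) h = ⟪u, h⟫ := by
      simp [InnerProductSpace.toDual_apply_apply]
    rw [happ2, happ h]
    have hub : Metric.infDist (x + h) K ≤ ‖x + h - P‖ := by
      simpa [dist_eq_norm] using Metric.infDist_le_dist_of_mem (x := x + h) hP
    have hlb : 0 ≤ Metric.infDist (x + h) K - Metric.infDist x K - ⟪u, h⟫ := by
      have h1 := hlow (x + h)
      have h2 : ⟪u, x + h - P⟫ - ⟪u, h⟫ = ⟪u, x - P⟫ := by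
        rw [← inner_sub_right]
        congr 1
        abel
      rw [hfx]
      linarith [h1, h2, huxP]
    have hle : Metric.infDist (x + h) K - Metric.infDist x K - ⟪u, h⟫
        ≤ ‖x + h - P‖ - ‖x - P‖ - ⟪u, h⟫ := by
      rw [hfx]; linarith [hub]
    rw [Real.norm_eq_abs, Real.norm_eq_abs]
    rw [abs_of_nonneg hlb]
    exact hle.trans (le_abs_self _)
  have hg : gradient (fun y => Metric.infDist y K) x = u := hgrad.gradient
  refine ⟨hg, by rw [hg]; exact hnu, ?_⟩
  intro y hy
  rw [hg, hu, real_inner_smul_left]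
  apply mul_nonpos_of_nonneg_of_nonpos (inv_nonneg.2 (norm_nonneg _))
  have hsplit : y - x = (y - P) - (x - P) := by abel
  rw [hsplit, inner_sub_right]
  have h1 := hvar y hy
  have h2 : (0:ℝ) ≤ ⟪x - P, x - P⟫ := real_inner_self_nonneg
  linarith
end

section
/- Ekeland's variational principle: Let (X, d) be a complete metric space and F : X → ℝ a lower semicontinuous function bounded from below. Suppose x₀ ∈ X satisfies F(x₀) ≤ inf F + ε for some ε > 0. Then for every λ > 0 there exists x̄ ∈ X with (i) F(x̄) ≤ F(x₀); (ii) d(x̄, x₀) ≤ λ; (iii) F(x) + (ε/λ)·d(x, x̄) ≥ F(x̄) for all x ∈ X. -/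
theorem stmt_12 {X : Type*} [MetricSpace X] [CompleteSpace X]
    (F : X → ℝ) (hlsc : LowerSemicontinuous F) (hbdd : BddBelow (Set.range F))
    (ε : ℝ) (hε : 0 < ε) (x₀ : X) (hx₀ : F x₀ ≤ (⨅ x, F x) + ε)
    (lam : ℝ) (hlam : 0 < lam) :
    ∃ xbar : X, F xbar ≤ F x₀ ∧ dist xbar x₀ ≤ lam ∧
      ∀ x : X, F xbar ≤ F x + (ε / lam) * dist x xbar := by
  set α := ε / lam with hαdef
  have hα : 0 < α := div_pos hε hlam
  -- S x : the set of points "better than" x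
  set S : X → Set X := fun x => {y | F y + α * dist y x ≤ F x} with hSdef
  have hself : ∀ x, x ∈ S x := by
    intro x; simp [hSdef]
  have hbddim : ∀ x : X, BddBelow (F '' S x) := fun x =>
    hbdd.mono (Set.image_subset_range F _)
  -- key selection: near-minimizers in S x
  have key : ∀ (x : X) (n : ℕ), ∃ y, y ∈ S x ∧ ∀ z ∈ S x, F y ≤ F z + (1/2)^n := by
    intro x n
    have hne : (F '' S x).Nonempty := ⟨F x, x, hself x, rfl⟩
    have hlt : sInf (F '' S x) < sInf (F '' S x) + (1/2)^n := by
      have : (0:ℝ) < (1/2)^n := by positivity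
      linarith
    obtain ⟨v, ⟨y, hyS, rfl⟩, hv⟩ := exists_lt_of_csInf_lt hne hlt
    exact ⟨y, hyS, fun z hz => le_trans hv.le (by
      have := csInf_le (hbddim x) ⟨z, hz, rfl⟩
      linarith)⟩
  choose f hf1 hf2 using key
  -- the iterated sequence
  let u : ℕ → X := fun n => Nat.rec x₀ (fun k x => f x k) n
  have hu0 : u 0 = x₀ := rfl
  have husucc : ∀ n, u (n+1) = f (u n) n := fun n => rfl
  have huS : ∀ n, u (n+1) ∈ S (u n) := fun n => hf1 (u n) n
  have humin : ∀ n, ∀ z ∈ S (u n), F (u (n+1)) ≤ F z + (1/2)^n := fun n => hf2 (u n) n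
  -- chain: u n ∈ S (u m) for m ≤ n
  have hchain : ∀ m n, m ≤ n → u n ∈ S (u m) := by
    intro m n hmn
    induction n with
    | zero => simpa [Nat.le_zero.mp hmn] using hself (u 0)
    | succ k ih =>
      rcases Nat.lt_or_ge m (k+1) with h | h
      · have hk : m ≤ k := Nat.lt_succ_iff.mp h
        have h1 := ih hk
        have h2 := huS k
        simp only [hSdef, Set.mem_setOf_eq] at h1 h2 ⊢
        have htri : dist (u (k+1)) (u m) ≤ dist (u (k+1)) (u k) + dist (u k) (u m) :=
          dist_triangle _ _ _
        nlinarith [hα]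
      · have : m = k+1 := le_antisymm hmn h
        subst this; exact hself _
  have hmemS : ∀ m n, m ≤ n → F (u n) + α * dist (u n) (u m) ≤ F (u m) := by
    intro m n h; exact hchain m n h
  -- F ∘ u is antitone and bounded below
  have hanti : Antitone (fun n => F (u n)) := by
    apply antitone_nat_of_succ_le
    intro n
    have := huS n
    simp only [hSdef, Set.mem_setOf_eq] at this
    nlinarith [dist_nonneg (x := u (n+1)) (y := u n), hα]
  have hbb : BddBelow (Set.range fun n => F (u n)) :=
    hbdd.mono (by rintro _ ⟨n, rfl⟩; exact ⟨u n, rfl⟩)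
  set L := ⨅ n, F (u n) with hLdef
  have hFL : Filter.Tendsto (fun n => F (u n)) Filter.atTop (nhds L) :=
    tendsto_atTop_ciInf hanti hbb
  have hLle : ∀ n, L ≤ F (u n) := fun n => ciInf_le hbb n
  -- u is Cauchy
  have hdistbd : ∀ N n m, N ≤ n → N ≤ m → dist (u n) (u m) ≤ 2 * (F (u N) - L) / α := by
    intro N n m hn hm
    have h1 := hmemS N n hn
    have h2 := hmemS N m hm
    have htri : dist (u n) (u m) ≤ dist (u n) (u N) + dist (u m) (u N) := by
      rw [dist_comm (u m) (u N)]; exact dist_triangle _ _ _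
    have hL1 := hLle n
    have hL2 := hLle m
    rw [le_div_iff₀ hα]
    nlinarith [hα]
  have hcau : CauchySeq u := by
    apply cauchySeq_of_le_tendsto_0 (fun N => 2 * (F (u N) - L) / α)
    · intro n m N hn hm; exact hdistbd N n m hn hm
    · have : Filter.Tendsto (fun N => 2 * (F (u N) - L) / α) Filter.atTop
          (nhds (2 * (L - L) / α)) :=
        ((hFL.sub tendsto_const_nhds).const_mul 2).div_const α
      simpa using this
  obtain ⟨xbar, hxbar⟩ := cauchySeq_tendsto_of_complete hcau
  -- xbar ∈ S (u m) for all m, by closedness of S (u m)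
  have hxbarS : ∀ m, xbar ∈ S (u m) := by
    intro m
    have hlscG : LowerSemicontinuous (fun y => F y + α * dist y (u m)) :=
      hlsc.add ((continuous_const.mul ((continuous_id.dist continuous_const))).lowerSemicontinuous)
    have hcl : IsClosed {y | F y + α * dist y (u m) ≤ F (u m)} := by
      have := lowerSemicontinuous_iff_isClosed_preimage.mp hlscG (F (u m))
      simpa [Set.preimage, Set.Iic] using this
    apply hcl.mem_of_tendsto hxbar
    filter_upwards [Filter.eventually_ge_atTop m] with n hn
    exact hchain m n hn
  have hxbarS0 : F xbar + α * dist xbar x₀ ≤ F x₀ := by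
    have := hxbarS 0; rwa [hu0] at this
  have hinf_le : (⨅ x, F x) ≤ F xbar := ciInf_le hbdd xbar
  refine ⟨xbar, ?_, ?_, ?_⟩
  · nlinarith [dist_nonneg (x := xbar) (y := x₀), hα]
  · have h1 : α * dist xbar x₀ ≤ ε := by linarith
    have h2 : α * lam = ε := by rw [hαdef, div_mul_cancel₀ ε hlam.ne']
    nlinarith [hα]
  · -- main inequality
    by_contra hcon
    push_neg at hcon
    obtain ⟨z, hz⟩ := hcon
    have hzS : ∀ n, z ∈ S (u n) := by
      intro n
      have h1 := hxbarS n
      simp only [hSdef, Set.mem_setOf_eq] at h1 ⊢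
      have htri : dist z (u n) ≤ dist z xbar + dist xbar (u n) := dist_triangle _ _ _
      nlinarith [hα]
    have hclose : ∀ n, α * dist z (u (n+1)) ≤ (1/2)^n := by
      intro n
      have h1 := humin n z (hzS n)
      have h2 := hzS (n+1)
      simp only [hSdef, Set.mem_setOf_eq] at h2
      linarith
    have hzxbar : dist z xbar ≤ 0 := by
      have ht : Filter.Tendsto (fun n : ℕ => (1/2:ℝ)^n / α + dist (u (n+1)) xbar)
          Filter.atTop (nhds (0/α + 0)) := by
        refine Filter.Tendsto.add ?_ ?_
        · exact (tendsto_pow_atTop_nhds_zero_of_lt_one (by norm_num) (by norm_num)).div_const α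
        · have := (hxbar.comp (Filter.tendsto_add_atTop_nat 1))
          simpa [Function.comp] using
            (tendsto_iff_dist_tendsto_zero.mp this)
      have hle : ∀ n, dist z xbar ≤ (1/2:ℝ)^n / α + dist (u (n+1)) xbar := by
        intro n
        have h1 := hclose n
        have h2 : dist z xbar ≤ dist z (u (n+1)) + dist (u (n+1)) xbar := dist_triangle _ _ _
        have h3 : dist z (u (n+1)) ≤ (1/2:ℝ)^n / α := by
          rw [le_div_iff₀ hα]; linarith [hclose n]
        linarith
      have := le_of_tendsto_of_tendsto' (f := fun _ : ℕ => dist z xbar)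
        (b := Filter.atTop) tendsto_const_nhds ht hle
      simpa using this
    have : z = xbar := by
      have := dist_nonneg (x := z) (y := xbar)
      have hd0 : dist z xbar = 0 := le_antisymm hzxbar this
      exact dist_eq_zero.mp hd0
    subst this
    simp at hz
end
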